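/- Let S be a dense subsemigroup of (T,+), e ∈ E(T), and (X,⟨T_s⟩_{s∈S}) a dynamical system. If x, y ∈ X are proximal near e, then there exists a minimal left ideal L of e*_S such that T_u(x) = T_u(y) for all u ∈ L. -/
import Mathlib


open Filter Topology Set

attribute [local instance] Ultrafilter.add Ultrafilter.addSemigroup

universe u

section NearIdem

variable {T : Type u} [AddSemigroup T] [TopologicalSpace T]

/-- The set of ultrafilters on `S` converging to `e` (denoted `e*_S`). -/
def EStar (S : AddSubsemigroup T) (e : T) : Set (Ultrafilter S) :=
  {p | ∀ U ∈ nhds e, {s : S | (s : T) ∈ U} ∈ p}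

/-- `B ⊆ S` is syndetic near `e`. -/
def SyndeticNear (S : AddSubsemigroup T) (e : T) (B : Set S) : Prop :=
  ∀ U ∈ nhds e, ∃ F : Finset S, (∀ t ∈ F, (t : T) ∈ U) ∧
    ∃ V ∈ nhds e, ∀ s : S, (s : T) ∈ V → ∃ t ∈ F, t + s ∈ B

/-- `A ⊆ S` is topologically piecewise syndetic near `e`. -/
def TopPWSNear (S : AddSubsemigroup T) (e : T) (A : Set S) : Prop :=
  ∀ U ∈ nhds e, ∃ F : Finset S, (∀ t ∈ F, (t : T) ∈ U) ∧
    ∃ V ∈ nhds e, ∀ G : Finset S, ∀ O ∈ nhds e, ∃ x : S, (x : T) ∈ O ∧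
      ∀ g ∈ G, (g : T) ∈ V → ∃ t ∈ F, t + (g + x) ∈ A

/-- Left ideal of a subsemigroup `E` of `βM`. -/
def IsLeftIdealIn {M : Type*} [AddSemigroup M] (E L : Set (Ultrafilter M)) : Prop :=
  L.Nonempty ∧ L ⊆ E ∧ ∀ p ∈ E, ∀ q ∈ L, p + q ∈ L

/-- Minimal left ideal of `E`. -/
def IsMinimalLeftIdealIn {M : Type*} [AddSemigroup M] (E L : Set (Ultrafilter M)) : Prop :=
  IsLeftIdealIn E L ∧ ∀ L', IsLeftIdealIn E L' → L' ⊆ L → L' = L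

/-- The smallest ideal `K(E)`, the union of all minimal left ideals of `E`. -/
def SmallestIdeal {M : Type*} [AddSemigroup M] (E : Set (Ultrafilter M)) : Set (Ultrafilter M) :=
  {p | ∃ L, IsMinimalLeftIdealIn E L ∧ p ∈ L}

/-- `T_p(x) = p`-`lim_(s ∈ S) T_s(x)`. -/
noncomputable def TP {M : Type*} {X : Type*} [TopologicalSpace X]
    (Ts : M → X → X) (p : Ultrafilter M) (x : X) : X :=
  (p.map fun s => Ts s x).lim

/-- `x` is a uniformly recurrent point near `e`. -/
def UnifRecNear (S : AddSubsemigroup T) (e : T) {X : Type*} [TopologicalSpace X]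
    (Ts : S → X → X) (x : X) : Prop :=
  ∀ W ∈ nhds x, SyndeticNear S e {s : S | Ts s x ∈ W}

/-- `x` and `y` are proximal near `e` (characterized via `e*_S`). -/
noncomputable def ProximalNear (S : AddSubsemigroup T) (e : T) {X : Type*} [TopologicalSpace X]
    (Ts : S → X → X) (x y : X) : Prop :=
  ∃ p ∈ EStar S e, TP Ts p x = TP Ts p y


section Aux

variable {M : Type*} {X : Type*} [TopologicalSpace X] [CompactSpace X]

lemma tendsto_TP (Ts : M → X → X) (p : Ultrafilter M) (x : X) :
    Filter.Tendsto (fun s => Ts s x) ↑p (nhds (TP Ts p x)) :=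
  (p.map fun s => Ts s x).le_nhds_lim

lemma TP_eq [T2Space X] (Ts : M → X → X) (p : Ultrafilter M) (x z : X)
    (h : Filter.Tendsto (fun s => Ts s x) ↑p (nhds z)) : TP Ts p x = z :=
  tendsto_nhds_unique (tendsto_TP Ts p x) h

lemma TP_add [AddSemigroup M] [T2Space X] (Ts : M → X → X)
    (hTcont : ∀ s, Continuous (Ts s))
    (hTact : ∀ s t z, Ts s (Ts t z) = Ts (s + t) z)
    (q p : Ultrafilter M) (x : X) :
    TP Ts (q + p) x = TP Ts q (TP Ts p x) := by
  apply TP_eq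
  rw [tendsto_nhds]
  intro A hA hwA
  have : ∀ᶠ m in ↑(q + p), Ts m x ∈ A := by
    rw [Ultrafilter.eventually_add]
    have h1 : ∀ᶠ a in ↑q, Ts a (TP Ts p x) ∈ A := (tendsto_TP Ts q _) (hA.mem_nhds hwA)
    filter_upwards [h1] with a ha
    have h2 : Filter.Tendsto (fun b => Ts a (Ts b x)) ↑p (nhds (Ts a (TP Ts p x))) :=
      ((hTcont a).tendsto _).comp (tendsto_TP Ts p x)
    filter_upwards [h2 (hA.mem_nhds ha)] with b hb
    rw [← hTact]; exact hb
  exact this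

end Aux

lemma isClosed_EStar (S : AddSubsemigroup T) (e : T) : IsClosed (EStar S e) := by
  have : EStar S e = ⋂ U ∈ nhds e, {p : Ultrafilter S | {s : S | (s : T) ∈ U} ∈ p} := by
    ext p; simp [EStar]
  rw [this]
  exact isClosed_biInter fun U _ => ultrafilter_isClosed_basic _

lemma add_mem_EStar (S : AddSubsemigroup T)
    (hl : ∀ t : T, Continuous fun x : T => t + x)
    (hr : ∀ t : T, Continuous fun x : T => x + t)
    (e : T) (he : e + e = e)
    {p q : Ultrafilter S} (hp : p ∈ EStar S e) (hq : q ∈ EStar S e) :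
    p + q ∈ EStar S e := by
  intro U hU
  obtain ⟨V, hVU, hVo, heV⟩ := mem_nhds_iff.mp hU
  have key : ∀ᶠ s : S in ↑(p + q), (s : T) ∈ V := by
    rw [Ultrafilter.eventually_add]
    have h0 : (fun x : T => x + e) ⁻¹' V ∈ nhds e := by
      have := (hr e).continuousAt (x := e)
      exact this (show V ∈ nhds (e + e) by rw [he]; exact hVo.mem_nhds heV)
    have h1 : ∀ᶠ a : S in ↑p, (a : T) ∈ (fun x : T => x + e) ⁻¹' V := hp _ h0
    filter_upwards [h1] with a ha
    have h2 : (fun x : T => (a : T) + x) ⁻¹' V ∈ nhds e :=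
      (hl (a : T)).continuousAt (hVo.mem_nhds ha)
    have h3 : ∀ᶠ b : S in ↑q, (b : T) ∈ (fun x : T => (a : T) + x) ⁻¹' V := hq _ h2
    filter_upwards [h3] with b hb
    simpa using hb
  exact Filter.mem_of_superset key fun s hs => hVU hs


variable [T2Space T]

/-- If `x` and `y` are proximal near `e`, then `T_u(x) = T_u(y)` for all `u`
in some minimal left ideal of `e*_S`. -/
theorem proximalNear_minimal_left_ideal (S : AddSubsemigroup T) (hdense : Dense (S : Set T))
    (hl : ∀ t : T, Continuous fun x : T => t + x)
    (hr : ∀ t : T, Continuous fun x : T => x + t)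
    (e : T) (he : e + e = e)
    {X : Type u} [TopologicalSpace X] [CompactSpace X] [T2Space X]
    (Ts : S → X → X) (hTcont : ∀ s, Continuous (Ts s))
    (hTact : ∀ s t z, Ts s (Ts t z) = Ts (s + t) z) (x y : X)
    (hprox : ProximalNear S e Ts x y) :
    ∃ L, IsMinimalLeftIdealIn (EStar S e) L ∧ ∀ u ∈ L, TP Ts u x = TP Ts u y := by
  classical
  obtain ⟨p, hpE, hpxy⟩ := hprox
  set E := EStar S e with hE
  have hEclosed : IsClosed E := isClosed_EStar S e
  have hadd : ∀ {a b : Ultrafilter S}, a ∈ E → b ∈ E → a + b ∈ E :=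
    fun ha hb => add_mem_EStar S hl hr e he ha hb
  have hEne : E.Nonempty := ⟨p, hpE⟩
  -- the left ideal E + p
  set L0 : Set (Ultrafilter S) := (fun q => q + p) '' E with hL0
  have hL0closed : IsClosed L0 :=
    (hEclosed.isCompact.image (Ultrafilter.continuous_add_left p)).isClosed
  have hL0ideal : IsLeftIdealIn E L0 := by
    refine ⟨⟨p + p, p, hpE, rfl⟩, ?_, ?_⟩
    · rintro _ ⟨q, hq, rfl⟩; exact hadd hq hpE
    · rintro r hr _ ⟨q, hq, rfl⟩
      exact ⟨r + q, hadd hr hq, by dsimp only; rw [add_assoc]⟩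
  -- Zorn for closed left ideals inside L0
  set 𝒮 : Set (Set (Ultrafilter S)) :=
    {L | IsLeftIdealIn E L ∧ IsClosed L ∧ L ⊆ L0} with h𝒮
  have hL0mem : L0 ∈ 𝒮 := ⟨hL0ideal, hL0closed, Set.Subset.rfl⟩
  obtain ⟨m, hmL0, hmmin⟩ := zorn_superset_nonempty 𝒮 (fun c hc hchain hcne => by
    refine ⟨⋂₀ c, ⟨⟨?_, ?_, ?_⟩, ?_, ?_⟩, fun s hs => Set.sInter_subset_of_mem hs⟩
    · haveI : Nonempty c := hcne.to_subtype
      exact IsCompact.nonempty_sInter_of_directed_nonempty_isCompact_isClosed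
        (IsChain.directedOn hchain.symm)
        (fun U hU => (hc hU).1.1)
        (fun U hU => (hc hU).2.1.isCompact)
        (fun U hU => (hc hU).2.1)
    · obtain ⟨U, hU⟩ := hcne
      exact (Set.sInter_subset_of_mem hU).trans (hc hU).1.2.1
    · intro r hr q hq
      rw [Set.mem_sInter] at hq ⊢
      exact fun U hU => (hc hU).1.2.2 r hr q (hq U hU)
    · exact isClosed_sInter fun U hU => (hc hU).2.1
    · obtain ⟨U, hU⟩ := hcne
      exact (Set.sInter_subset_of_mem hU).trans (hc hU).2.2) L0 hL0mem
  obtain ⟨⟨hmideal, hmclosed, hmsub⟩, hmin⟩ := hmmin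
  refine ⟨m, ⟨hmideal, ?_⟩, ?_⟩
  · -- minimality among all left ideals
    intro L' hL' hL'm
    obtain ⟨q, hq⟩ := hL'.1
    set K : Set (Ultrafilter S) := (fun r => r + q) '' E with hK
    have hKsubL' : K ⊆ L' := by
      rintro _ ⟨r, hr, rfl⟩
      exact hL'.2.2 r hr q hq
    have hKmem : K ∈ 𝒮 := by
      refine ⟨⟨⟨p + q, p, hpE, rfl⟩, ?_, ?_⟩, ?_, ?_⟩
      · rintro _ ⟨r, hr, rfl⟩; exact hadd hr (hL'.2.1 hq)
      · rintro r hr _ ⟨s, hs, rfl⟩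
        exact ⟨r + s, hadd hr hs, by dsimp only; rw [add_assoc]⟩
      · exact (hEclosed.isCompact.image (Ultrafilter.continuous_add_left q)).isClosed
      · exact (hKsubL'.trans hL'm).trans hmsub
    have : m ⊆ K := hmin hKmem (hKsubL'.trans hL'm)
    exact Set.Subset.antisymm hL'm (this.trans hKsubL')
  · -- T_u x = T_u y on m
    intro u hu
    obtain ⟨q, hq, rfl⟩ := hmsub hu
    rw [TP_add Ts hTcont hTact q p x, TP_add Ts hTcont hTact q p y, hpxy]

end NearIdem
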